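/- Let (x1,x2,x3,x4,x5,x6) be real numbers with x2, x4, x6 > 0 satisfying the system (E): x1 = 2·x2·x4 − (1/2)·(x2/x4 + x4/x2), x3 = 2·x4·x6 − (1/2)·(x4/x6 + x6/x4), x5 = 2·x2·x6 − (1/2)·(x2/x6 + x6/x2). If x1 ≥ 1, x3 ≥ 1 and x5 ≥ 1, then x2 > 1/2, x4 > 1/2 and x6 > 1/2. -/

import Mathlib

lemma stmt0_aux (a b : ℝ) (ha : 0 < a) (hb : 0 < b)
    (h : 1 ≤ 2 * a * b - (1/2) * (a / b + b / a)) : 1/2 < a ∧ 1/2 < b := by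
  have hab : 0 < a * b := mul_pos ha hb
  have hfs : (a / b + b / a) * (a * b) = a * a + b * b := by
    field_simp
  have h2 : a * b ≤ (2 * a * b - (1/2) * (a / b + b / a)) * (a * b) := by
    nlinarith [mul_le_mul_of_nonneg_right h hab.le]
  have h3 : a + b ≤ 2 * (a * b) := by nlinarith [sq_nonneg (a + b - 2 * a * b)]
  constructor <;> nlinarith

/-- If (x1,...,x6) with x2,x4,x6 > 0 satisfies the system (E) and
x1, x3, x5 ≥ 1, then x2, x4, x6 > 1/2. -/
theorem stmt_0 (x1 x2 x3 x4 x5 x6 : ℝ)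
    (h2 : 0 < x2) (h4 : 0 < x4) (h6 : 0 < x6)
    (e1 : x1 = 2 * x2 * x4 - (1/2) * (x2 / x4 + x4 / x2))
    (e3 : x3 = 2 * x4 * x6 - (1/2) * (x4 / x6 + x6 / x4))
    (e5 : x5 = 2 * x2 * x6 - (1/2) * (x2 / x6 + x6 / x2))
    (h1 : 1 ≤ x1) (h3 : 1 ≤ x3) (h5 : 1 ≤ x5) :
    1/2 < x2 ∧ 1/2 < x4 ∧ 1/2 < x6 := by
  obtain ⟨a, b⟩ := stmt0_aux x2 x4 h2 h4 (e1 ▸ h1)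
  obtain ⟨c, d⟩ := stmt0_aux x4 x6 h4 h6 (e3 ▸ h3)
  exact ⟨a, b, d⟩
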